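/- Let m ≥ 1 and n ≥ 1, and let (x₁, y₁), …, (xₙ, yₙ) be a finite dataset with yᵢ ∈ Fin m, and let l : Fin m → X → ℝ be logit functions. Then the empirical average log-likelihood L(T) = (1/n) ∑_{i=1}^n log( exp(l yᵢ xᵢ / T) / ∑_{j=1}^m exp(l j xᵢ / T) ) is a unimodal (quasiconcave) function of T on (0, ∞); that is, for all 0 < T₁ ≤ T₂ ≤ T₃ one has L(T₂) ≥ min(L(T₁), L(T₃)). -/

import Mathlib

open Real Finset

lemma logsumexp_convex {k : ℕ} (hk : 1 ≤ k) (b : Fin k → ℝ) {t u : ℝ}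
    (ht : 0 ≤ t) (hu : 0 ≤ u) (htu : t + u = 1) (β γ : ℝ) :
    Real.log (∑ j : Fin k, Real.exp ((t * β + u * γ) * b j)) ≤
      t * Real.log (∑ j : Fin k, Real.exp (β * b j)) +
      u * Real.log (∑ j : Fin k, Real.exp (γ * b j)) := by
  have hne : (Finset.univ : Finset (Fin k)).Nonempty := by
    have : Nonempty (Fin k) := ⟨⟨0, hk⟩⟩
    exact Finset.univ_nonempty
  have hpos : ∀ δ : ℝ, 0 < ∑ j : Fin k, Real.exp (δ * b j) := fun δ =>
    Finset.sum_pos (fun j _ => Real.exp_pos _) hne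
  rcases eq_or_lt_of_le ht with h0 | ht'
  · have hu1 : u = 1 := by linarith
    simp [← h0, hu1]
  rcases eq_or_lt_of_le hu with h0 | hu'
  · have ht1 : t = 1 := by linarith
    simp [← h0, ht1]
  have hpq : Real.HolderConjugate (1/t) (1/u) := by
    rw [Real.holderConjugate_iff]
    constructor
    · rw [lt_div_iff₀ ht']; linarith
    · simp only [one_div, inv_inv]; linarith
  have holder := Real.inner_le_Lp_mul_Lq Finset.univ
    (fun j : Fin k => Real.exp (β * b j) ^ t) (fun j : Fin k => Real.exp (γ * b j) ^ u) hpq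
  have e1 : ∀ j : Fin k, Real.exp (β * b j) ^ t * Real.exp (γ * b j) ^ u
      = Real.exp ((t * β + u * γ) * b j) := by
    intro j
    rw [← Real.exp_mul, ← Real.exp_mul, ← Real.exp_add]
    ring_nf
  have e2 : ∀ (c e : ℝ), 0 < e → |Real.exp c ^ e| ^ (1/e) = Real.exp c := by
    intro c e he
    rw [abs_of_pos (Real.rpow_pos_of_pos (Real.exp_pos _) _),
      ← Real.rpow_mul (Real.exp_pos _).le, mul_one_div_cancel he.ne', Real.rpow_one]
  rw [show (1:ℝ)/(1/t) = t by rw [one_div_one_div],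
      show (1:ℝ)/(1/u) = u by rw [one_div_one_div]] at holder
  simp only [e1] at holder
  have habs1 : ∀ j : Fin k, |Real.exp (β * b j) ^ t| ^ (1/t) = Real.exp (β * b j) :=
    fun j => e2 _ _ ht'
  have habs2 : ∀ j : Fin k, |Real.exp (γ * b j) ^ u| ^ (1/u) = Real.exp (γ * b j) :=
    fun j => e2 _ _ hu'
  simp only [habs1, habs2] at holder
  calc Real.log (∑ j : Fin k, Real.exp ((t * β + u * γ) * b j))
      ≤ Real.log ((∑ j : Fin k, Real.exp (β * b j)) ^ t *
          (∑ j : Fin k, Real.exp (γ * b j)) ^ u) :=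
        Real.log_le_log (hpos _) holder
    _ = t * Real.log (∑ j : Fin k, Real.exp (β * b j)) +
          u * Real.log (∑ j : Fin k, Real.exp (γ * b j)) := by
        rw [Real.log_mul (Real.rpow_pos_of_pos (hpos β) t).ne'
            (Real.rpow_pos_of_pos (hpos γ) u).ne',
          Real.log_rpow (hpos β), Real.log_rpow (hpos γ)]

/-- The empirical average temperature-scaled log-likelihood of a finite dataset is
unimodal (quasiconcave) in the temperature `T` on `(0, ∞)`. -/
theorem empirical_log_likelihood_unimodal
    {X : Type*} (m n : ℕ) (hm : 1 ≤ m) (hn : 1 ≤ n)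
    (x : Fin n → X) (y : Fin n → Fin m) (l : Fin m → X → ℝ)
    (L : ℝ → ℝ)
    (hL : ∀ T : ℝ, 0 < T →
      L T = (1 / (n : ℝ)) * ∑ i : Fin n,
        Real.log (Real.exp (l (y i) (x i) / T) / ∑ j : Fin m, Real.exp (l j (x i) / T))) :
    ∀ T₁ T₂ T₃ : ℝ, 0 < T₁ → T₁ ≤ T₂ → T₂ ≤ T₃ →
      min (L T₁) (L T₃) ≤ L T₂ := by
  intro T₁ T₂ T₃ hT₁ h12 h23
  have hT₂ : 0 < T₂ := lt_of_lt_of_le hT₁ h12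
  have hT₃ : 0 < T₃ := lt_of_lt_of_le hT₂ h23
  set g : Fin n → ℝ → ℝ := fun i β =>
    β * l (y i) (x i) - Real.log (∑ j : Fin m, Real.exp (β * l j (x i))) with hg
  have hne : (Finset.univ : Finset (Fin m)).Nonempty := by
    have : Nonempty (Fin m) := ⟨⟨0, hm⟩⟩
    exact Finset.univ_nonempty
  have hLrw : ∀ T : ℝ, 0 < T → L T = (1 / (n : ℝ)) * ∑ i : Fin n, g i (1/T) := by
    intro T hT
    rw [hL T hT]
    congr 1
    refine Finset.sum_congr rfl fun i _ => ?_
    have hspos : 0 < ∑ j : Fin m, Real.exp (l j (x i) / T) :=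
      Finset.sum_pos (fun j _ => Real.exp_pos _) hne
    rw [Real.log_div (Real.exp_ne_zero _) hspos.ne', Real.log_exp, hg]
    simp only [one_div, inv_mul_eq_div]
  -- β values
  set β₁ := 1/T₁; set β₂ := 1/T₂; set β₃ := 1/T₃
  have hb12 : β₂ ≤ β₁ := one_div_le_one_div_of_le hT₁ h12
  have hb23 : β₃ ≤ β₂ := one_div_le_one_div_of_le hT₂ h23
  -- β₂ ∈ segment β₃ β₁
  have hmem : β₂ ∈ segment ℝ β₃ β₁ := by
    rw [segment_eq_Icc (le_trans hb23 hb12)]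
    exact ⟨hb23, hb12⟩
  obtain ⟨t, u, ht, hu, htu, heq⟩ := hmem
  simp only [smul_eq_mul] at heq
  -- key per-index inequality
  have key : ∀ i : Fin n, t * g i β₃ + u * g i β₁ ≤ g i β₂ := by
    intro i
    have := logsumexp_convex hm (fun j => l j (x i)) ht hu htu β₃ β₁
    simp only [hg]
    rw [← heq]
    nlinarith [this]
  -- conclude
  rw [hLrw T₁ hT₁, hLrw T₂ hT₂, hLrw T₃ hT₃]
  have hn0 : (0:ℝ) ≤ 1 / (n:ℝ) := by positivity
  set S₁ := ∑ i : Fin n, g i β₁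
  set S₂ := ∑ i : Fin n, g i β₂
  set S₃ := ∑ i : Fin n, g i β₃
  have hsum : t * S₃ + u * S₁ ≤ S₂ := by
    calc t * S₃ + u * S₁ = ∑ i : Fin n, (t * g i β₃ + u * g i β₁) := by
          rw [Finset.sum_add_distrib, ← Finset.mul_sum, ← Finset.mul_sum]
      _ ≤ S₂ := Finset.sum_le_sum fun i _ => key i
  have hmin : min ((1/(n:ℝ)) * S₁) ((1/(n:ℝ)) * S₃) ≤ (1/(n:ℝ)) * S₂ := by
    rcases le_total S₁ S₃ with h | h
    · calc min ((1/(n:ℝ)) * S₁) ((1/(n:ℝ)) * S₃) ≤ (1/(n:ℝ)) * S₁ := min_le_left _ _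
        _ ≤ (1/(n:ℝ)) * S₂ := by
            apply mul_le_mul_of_nonneg_left _ hn0
            have e : t * S₁ + u * S₁ = S₁ := by linear_combination S₁ * htu
            have := mul_le_mul_of_nonneg_left h ht
            linarith
    · calc min ((1/(n:ℝ)) * S₁) ((1/(n:ℝ)) * S₃) ≤ (1/(n:ℝ)) * S₃ := min_le_right _ _
        _ ≤ (1/(n:ℝ)) * S₂ := by
            apply mul_le_mul_of_nonneg_left _ hn0
            have e : t * S₃ + u * S₃ = S₃ := by linear_combination S₃ * htu
            have := mul_le_mul_of_nonneg_left h hu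
            linarith
  exact hmin
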